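/- Let k be a nonnegative integer, n a positive integer with k ≤ n, and 0 < p < 1 with q = 1 - p. Then μ_{n,k}(p) ≥ k + 1 - L(n-1,k,p) = (p·n + k + q - √((p·n - k + q)² + 4·q·k))/2, and (n-k+1)/((n+1)·q) ≤ B_{n,k}(p)/B_{n+1,k}(p) ≤ (n - k + L(n,k,p))/((n+1)·q). If in addition k ≤ p·n, then μ_{n,k}(p) ≥ k + q/2 - (1/2)·√(q·(4k+q)) ≥ k - √(q·k). -/

import Mathlib

open Real

/-- Binomial probability `b_{n,k}(p)`. -/
noncomputable def b (n k : ℕ) (p : ℝ) : ℝ :=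
  (n.choose k : ℝ) * p ^ k * (1 - p) ^ (n - k)

/-- Lower tail probability `B_{n,k}(p)`. -/
noncomputable def B (n k : ℕ) (p : ℝ) : ℝ :=
  ∑ j ∈ Finset.range (k + 1), (n.choose j : ℝ) * p ^ j * (1 - p) ^ (n - j)

/-- Partial mean `μ_{n,k}(p)`. -/
noncomputable def mu (n k : ℕ) (p : ℝ) : ℝ :=
  ∑ j ∈ Finset.range (k + 1), (j : ℝ) * b n j p / B n k p

/-- `L(n,k,p)` evaluated at real arguments. -/
noncomputable def L (n k p : ℝ) : ℝ :=
  (k + 1 - p * n + Real.sqrt ((p * n - k + 1) ^ 2 + 4 * (1 - p) * k)) / 2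

variable {p : ℝ}

lemma b_pos (hp0 : 0 < p) (hp1 : p < 1) {n k : ℕ} (hkn : k ≤ n) : 0 < b n k p := by
  have : 0 < (n.choose k : ℝ) := by exact_mod_cast Nat.choose_pos hkn
  have hq : 0 < 1 - p := by linarith
  unfold b; positivity

lemma b_nonneg (hp0 : 0 < p) (hp1 : p < 1) (n k : ℕ) : 0 ≤ b n k p := by
  have hq : 0 < 1 - p := by linarith
  have : (0:ℝ) ≤ (n.choose k : ℝ) := by positivity
  unfold b; positivity

lemma B_succ (n k : ℕ) : B n (k+1) p = B n k p + b n (k+1) p := by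
  unfold B b; rw [Finset.sum_range_succ]

lemma B_pos (hp0 : 0 < p) (hp1 : p < 1) (n k : ℕ) : 0 < B n k p := by
  induction k with
  | zero =>
    have hq : 0 < 1 - p := by linarith
    simp [B]
    positivity
  | succ k ih =>
    rw [B_succ]
    have := b_nonneg hp0 hp1 n (k+1)
    linarith

lemma b_ratio (hp0 : 0 < p) {n k : ℕ} (h : k < n) :
    ((k:ℝ)+1) * (1-p) * b n (k+1) p = ((n:ℝ) - k) * p * b n k p := by
  have hc : ((n.choose (k+1) : ℕ):ℝ) * ((k:ℝ)+1) = (n.choose k : ℝ) * ((n:ℝ) - k) := by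
    have := Nat.choose_succ_right_eq n k
    have h2 : ((n - k : ℕ):ℝ) = (n:ℝ) - k := by
      push_cast [Nat.cast_sub h.le]; ring
    rw [← h2]; exact_mod_cast this
  have hpow : (1-p) ^ (n-k) = (1-p) ^ (n-(k+1)) * (1-p) := by
    rw [← pow_succ]; congr 1; omega
  have hpp : p ^ (k+1) = p ^ k * p := pow_succ p k
  unfold b
  rw [hpow, hpp]
  linear_combination (p^k * p * (1-p)^(n-(k+1)) * (1-p)) * hc

lemma b_left (hp0 : 0 < p) {n k : ℕ} (h : k ≤ n) :
    ((n:ℝ) + 1 - k) * b (n+1) k p = ((n:ℝ)+1) * (1-p) * b n k p := by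
  have hc : ((n.choose k : ℕ):ℝ) * ((n:ℝ)+1) = ((n+1).choose k : ℝ) * ((n:ℝ) + 1 - k) := by
    have := Nat.choose_mul_succ_eq n k
    have h2 : ((n + 1 - k : ℕ):ℝ) = (n:ℝ) + 1 - k := by
      push_cast [Nat.cast_sub (by omega : k ≤ n + 1)]; ring
    rw [← h2]; exact_mod_cast this
  have hpow : (1-p) ^ (n+1-k) = (1-p) ^ (n-k) * (1-p) := by
    rw [← pow_succ]; congr 1; omega
  unfold b
  rw [hpow]
  linear_combination (-(p^k * (1-p)^(n-k) * (1-p))) * hc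

lemma b_pascal {n k : ℕ} (h : k ≤ n) :
    b (n+1) (k+1) p = (1-p) * b n (k+1) p + p * b n k p := by
  have hc : (((n+1).choose (k+1) : ℕ):ℝ) = (n.choose k : ℝ) + (n.choose (k+1) : ℝ) := by
    exact_mod_cast Nat.choose_succ_succ n k
  by_cases hk : k + 1 ≤ n
  · have hpow : (1-p) ^ (n-k) = (1-p) ^ (n-(k+1)) * (1-p) := by
      rw [← pow_succ]; congr 1; omega
    unfold b
    have e1 : n + 1 - (k+1) = n - k := by omega
    rw [e1, hc, hpow]
    ring
  · have hkn : k = n := by omega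
    subst hkn
    unfold b
    have e0 : k.choose (k+1) = 0 := Nat.choose_eq_zero_of_lt (by omega)
    have e1 : (k+1).choose (k+1) = 1 := Nat.choose_self _
    have e2 : k.choose k = 1 := Nat.choose_self _
    rw [e0, e1, e2]
    simp [pow_succ]
    ring

lemma B_pascal (hp0 : 0 < p) : ∀ {n k : ℕ}, k ≤ n → B (n+1) k p = B n k p - p * b n k p := by
  intro n k
  induction k with
  | zero =>
    intro _
    simp only [B]
    simp [b, pow_succ]
    ring
  | succ k ih =>
    intro h
    have hk : k ≤ n := by omega
    rw [B_succ, B_succ, ih hk, b_pascal hk]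
    ring

lemma sum_j_b (hp0 : 0 < p) : ∀ {n k : ℕ}, k ≤ n →
    ∑ j ∈ Finset.range (k+1), (j:ℝ) * b n j p
      = (n:ℝ)*p*(B n k p) - p*((n:ℝ)-k)*(b n k p) := by
  intro n k
  induction k with
  | zero =>
    intro _
    simp [B, b]
    ring
  | succ k ih =>
    intro h
    have hk : k ≤ n := by omega
    rw [Finset.sum_range_succ, ih hk, B_succ]
    have hr := b_ratio hp0 (show k < n by omega)
    push_cast
    linear_combination hr

lemma L_quad {x k : ℝ} (hk : 0 ≤ k) (hp : p ≤ 1) :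
    L x k p ^ 2 = (k + 1 - p * x) * L x k p + p * (x - k) := by
  have hD : 0 ≤ (p * x - k + 1) ^ 2 + 4 * (1 - p) * k := by
    have : 0 ≤ (1 - p) * k := mul_nonneg (by linarith) hk
    nlinarith [sq_nonneg (p * x - k + 1)]
  have hs := Real.sq_sqrt hD
  unfold L
  linear_combination (1/4 : ℝ) * hs

lemma L_ge_one {x k : ℝ} (hk : 0 ≤ k) (hp : p ≤ 1) : 1 ≤ L x k p := by
  have h1 : Real.sqrt ((p * x - k + 1) ^ 2) ≤
      Real.sqrt ((p * x - k + 1) ^ 2 + 4 * (1 - p) * k) := by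
    apply Real.sqrt_le_sqrt
    have : 0 ≤ (1 - p) * k := mul_nonneg (by linarith) hk
    linarith
  rw [Real.sqrt_sq_eq_abs] at h1
  have h2 : p * x - k + 1 ≤ |p * x - k + 1| := le_abs_self _
  unfold L
  linarith

lemma le_L {x k t : ℝ}
    (h : (2 * t - (k + 1 - p * x)) ^ 2 ≤ (p * x - k + 1) ^ 2 + 4 * (1 - p) * k) :
    t ≤ L x k p := by
  have h1 := Real.sqrt_le_sqrt h
  rw [Real.sqrt_sq_eq_abs] at h1
  have h2 : 2 * t - (k + 1 - p * x) ≤ |2 * t - (k + 1 - p * x)| := le_abs_self _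
  unfold L
  linarith

set_option maxHeartbeats 1000000 in
lemma L_step {n k lam : ℝ} (hk : 0 ≤ k) (hd : k + 1 ≤ n) (hp0 : 0 < p) (hp1 : p < 1)
    (hl1 : 1 ≤ lam) (hq : lam ^ 2 = (k + 1 - p * n) * lam + p * (n - k)) :
    L n (k + 1) p ≤ lam * (k + 1) * (1 - p) / ((n - k) * p) + 1 := by
  have hq' : 0 < 1 - p := by linarith
  have hdpos : 0 < n - k := by linarith
  have hdp : 0 < (n - k) * p := mul_pos hdpos hp0
  have hlpos : 0 < lam := by linarith
  have hpd0 : 0 ≤ p * (n - k) := by positivity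
  have hlc : k + 1 - p * n ≤ lam := by nlinarith [hq, hlpos]
  have e3 : (lam - (k + 1 - p * n)) * (lam - 1) * lam = p * (n - k) * (lam - 1) := by
    linear_combination (lam - 1) * hq
  have hG : (lam - (k + 1 - p * n)) * (lam - 1) ≤ (k + 1) * (1 - p) := by
    rcases le_or_gt ((n - k) * p) ((k + 1) * (1 - p)) with hcase | hcase
    · have h3 := mul_le_mul_of_nonneg_right hcase hlpos.le
      have h4 : (lam - (k + 1 - p * n)) * (lam - 1) * lam ≤ (k + 1) * (1 - p) * lam := by
        rw [e3]; nlinarith [h3]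
      exact le_of_mul_le_mul_right h4 hlpos
    · have hs0 : 0 < (n - k) * p - (k + 1) * (1 - p) := by linarith
      have hkey : ((n - k) * p - ((n - k) * p - (k + 1) * (1 - p)) * lam) *
            ((n - k) * p - ((n - k) * p - (k + 1) * (1 - p)) * (k + 1 - p * n)
              + ((n - k) * p - (k + 1) * (1 - p)) * lam)
          = (n - k) * p * (p * (1 - p) * (n + 1)) := by
        linear_combination (-(((n - k) * p - (k + 1) * (1 - p)) ^ 2)) * hq
      have hf2 : 0 < (n - k) * p - ((n - k) * p - (k + 1) * (1 - p)) * (k + 1 - p * n)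
              + ((n - k) * p - (k + 1) * (1 - p)) * lam := by
        have e1 : (n - k) * p - ((n - k) * p - (k + 1) * (1 - p)) * (k + 1 - p * n)
            = p * (1 - p) * (n + 1) + ((n - k) * p - (k + 1) * (1 - p)) ^ 2 := by
          ring
        nlinarith [mul_pos hs0 hlpos, mul_pos (mul_pos hp0 hq') (show (0:ℝ) < n + 1 by linarith),
          sq_nonneg ((n - k) * p - (k + 1) * (1 - p))]
      have hf1 : 0 ≤ (n - k) * p - ((n - k) * p - (k + 1) * (1 - p)) * lam := by
        have h8 : 0 < ((n - k) * p - ((n - k) * p - (k + 1) * (1 - p)) * lam) *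
            ((n - k) * p - ((n - k) * p - (k + 1) * (1 - p)) * (k + 1 - p * n)
              + ((n - k) * p - (k + 1) * (1 - p)) * lam) := by
          rw [hkey]
          exact mul_pos hdp (mul_pos (mul_pos hp0 hq') (show (0:ℝ) < n + 1 by linarith))
        rcases mul_pos_iff.mp h8 with ⟨h9, _⟩ | ⟨_, h9⟩
        · exact h9.le
        · linarith
      have h4 : (lam - (k + 1 - p * n)) * (lam - 1) * lam ≤ (k + 1) * (1 - p) * lam := by
        rw [e3]; linarith [hf1]
      exact le_of_mul_le_mul_right h4 hlpos
  -- sign of the square-root majorant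
  have hm0 : 0 ≤ lam * (k + 1) * (1 - p) / ((n - k) * p) := by positivity
  have ha : 0 ≤ 2 * (lam * (k + 1) * (1 - p) / ((n - k) * p)) + (p * n - k) := by
    rcases le_or_gt 0 (p * n - k) with h | h
    · linarith
    · have h5' : (k - p * n) * ((n - k) * p) ≤ 2 * (lam * (k + 1) * (1 - p)) := by
        nlinarith [mul_le_mul_of_nonneg_left (show (n - k) * p ≤ k * (1 - p) by nlinarith)
            (show (0:ℝ) ≤ k - p * n by linarith),
          mul_le_mul_of_nonneg_right (show k - p * n ≤ lam by linarith)
            (show (0:ℝ) ≤ k * (1 - p) by positivity),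
          mul_nonneg (mul_nonneg hlpos.le hq'.le) (show (0:ℝ) ≤ k + 2 by linarith)]
      have h5 : (k - p * n) ≤ 2 * (lam * (k + 1) * (1 - p)) / ((n - k) * p) :=
        (le_div_iff₀ hdp).mpr h5'
      rw [mul_div_assoc] at h5
      linarith
  -- squared inequality (polynomial form)
  have hdp_eq : p * (n - k) = lam ^ 2 - (k + 1 - p * n) * lam := by linear_combination (-1 : ℝ) * hq
  have hb2 : (k + 1) * (1 - p) * lam ^ 2 + (p * n - k) * (p * (n - k)) * lam - (p * (n - k)) ^ 2
      = lam ^ 2 * ((k + 1) * (1 - p) - (lam - (k + 1 - p * n)) * (lam - 1)) := by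
    rw [hdp_eq]; ring
  have hb2pos : 0 ≤ (k + 1) * (1 - p) * lam ^ 2
      + (p * n - k) * (p * (n - k)) * lam - (p * (n - k)) ^ 2 := by
    rw [hb2]
    have h6 : 0 ≤ (k + 1) * (1 - p) - (lam - (k + 1 - p * n)) * (lam - 1) := by linarith
    exact mul_nonneg (sq_nonneg lam) h6
  have hb_poly : ((p * n - k) ^ 2 + 4 * (1 - p) * (k + 1)) * (p * (n - k)) ^ 2
      ≤ (2 * (lam * (k + 1) * (1 - p)) + (p * n - k) * (p * (n - k))) ^ 2 := by
    have hfinal : (2 * (lam * (k + 1) * (1 - p)) + (p * n - k) * (p * (n - k))) ^ 2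
        - ((p * n - k) ^ 2 + 4 * (1 - p) * (k + 1)) * (p * (n - k)) ^ 2
        = 4 * ((k + 1) * (1 - p)) * ((k + 1) * (1 - p) * lam ^ 2
            + (p * n - k) * (p * (n - k)) * lam - (p * (n - k)) ^ 2) := by ring
    nlinarith [mul_nonneg (show (0:ℝ) ≤ 4 * ((k + 1) * (1 - p)) by positivity) hb2pos]
  -- put together
  have hR : (2 * (lam * (k + 1) * (1 - p) / ((n - k) * p)) + (p * n - k)) * (p * (n - k))
      = 2 * (lam * (k + 1) * (1 - p)) + (p * n - k) * (p * (n - k)) := by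
    field_simp
  have hsq : (p * n - k) ^ 2 + 4 * (1 - p) * (k + 1)
      ≤ (2 * (lam * (k + 1) * (1 - p) / ((n - k) * p)) + (p * n - k)) ^ 2 := by
    have h7 : ((p * n - k) ^ 2 + 4 * (1 - p) * (k + 1)) * (p * (n - k)) ^ 2
        ≤ ((2 * (lam * (k + 1) * (1 - p) / ((n - k) * p)) + (p * n - k)) * (p * (n - k))) ^ 2 := by
      rw [hR]; exact hb_poly
    rw [mul_pow (2 * (lam * (k + 1) * (1 - p) / ((n - k) * p)) + (p * n - k)) (p * (n - k))] at h7
    exact le_of_mul_le_mul_right h7 (by positivity)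
  have hsqrt : Real.sqrt ((p * n - (k + 1) + 1) ^ 2 + 4 * (1 - p) * (k + 1))
      ≤ 2 * (lam * (k + 1) * (1 - p) / ((n - k) * p)) + (p * n - k) := by
    rw [show (p * n - (k + 1) + 1) ^ 2 + 4 * (1 - p) * (k + 1)
        = (p * n - k) ^ 2 + 4 * (1 - p) * (k + 1) from by ring]
    calc Real.sqrt ((p * n - k) ^ 2 + 4 * (1 - p) * (k + 1))
        ≤ Real.sqrt ((2 * (lam * (k + 1) * (1 - p) / ((n - k) * p)) + (p * n - k)) ^ 2) :=
          Real.sqrt_le_sqrt hsq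
      _ = _ := Real.sqrt_sq ha
  unfold L
  linarith [hsqrt]

lemma key_lemma (hp0 : 0 < p) (hp1 : p < 1) :
    ∀ {n k : ℕ}, k ≤ n → L n k p * b n k p ≤ B n k p := by
  intro n k
  induction k with
  | zero =>
    intro _
    have h1 : L (n : ℝ) ((0:ℕ) : ℝ) p = 1 := by
      unfold L
      push_cast
      rw [show (p * (n:ℝ) - 0 + 1) ^ 2 + 4 * (1 - p) * 0 = (p * (n:ℝ) + 1) ^ 2 from by ring,
        Real.sqrt_sq (by positivity)]
      ring
    rw [h1, one_mul]
    apply le_of_eq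
    simp [B, b, Finset.sum_range_one]
  | succ k ih =>
    intro h
    have hk : k ≤ n := by omega
    have hkey := ih hk
    have hk0 : (0:ℝ) ≤ (k:ℝ) := by positivity
    have hkn1 : (k:ℝ) + 1 ≤ (n:ℝ) := by exact_mod_cast h
    have hstep := L_step (p := p) (n := (n:ℝ)) (k := (k:ℝ)) (lam := L n k p)
      hk0 hkn1 hp0 hp1 (L_ge_one hk0 hp1.le) (L_quad hk0 hp1.le)
    have hcast : ((k+1:ℕ) : ℝ) = (k:ℝ) + 1 := by push_cast; ring
    rw [B_succ]
    have hb2 := b_pos hp0 hp1 h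
    have hr := b_ratio hp0 (show k < n by omega)
    have hnk : (0:ℝ) < ((n:ℝ) - k) * p := by
      apply mul_pos _ hp0; linarith
    have e : (L n k p * ((k:ℝ) + 1) * (1 - p) / (((n:ℝ) - k) * p)) * b n (k+1) p
        = L n k p * b n k p := by
      rw [div_mul_eq_mul_div, div_eq_iff hnk.ne']
      linear_combination (L (n:ℝ) (k:ℝ) p) * hr
    calc L (n:ℝ) ((k+1:ℕ):ℝ) p * b n (k+1) p
        ≤ (L n k p * ((k:ℝ)+1) * (1 - p) / (((n:ℝ) - k) * p) + 1) * b n (k+1) p := by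
          rw [hcast]
          exact mul_le_mul_of_nonneg_right hstep hb2.le
      _ = L n k p * b n k p + b n (k+1) p := by rw [add_mul, one_mul, e]
      _ ≤ B n k p + b n (k+1) p := by linarith

lemma Gclaim (hp0 : 0 < p) (hp1 : p < 1) {n k : ℕ} (hk : k ≤ n) :
    ∀ j, j ≤ k → (((n:ℝ) + 1) * p - k) * B n j p ≤ ((n:ℝ) - k + 1) * p * b n j p := by
  have hq' : (0:ℝ) < 1 - p := by linarith
  have hkn : (k:ℝ) ≤ (n:ℝ) := by exact_mod_cast hk
  have hk0 : (0:ℝ) ≤ (k:ℝ) := by positivity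
  intro j
  induction j with
  | zero =>
    intro _
    have hB0 : B n 0 p = b n 0 p := by simp [B, b, Finset.sum_range_one]
    rw [hB0]
    have hb := b_pos hp0 hp1 (Nat.zero_le n)
    have hco : ((n:ℝ) + 1) * p - k ≤ ((n:ℝ) - k + 1) * p := by nlinarith
    exact mul_le_mul_of_nonneg_right hco hb.le
  | succ j ihj =>
    intro h
    have hj : j ≤ k := by omega
    have hik := ihj hj
    have hjn : j < n := by omega
    have hr := b_ratio hp0 hjn
    have hb2 := b_pos hp0 hp1 (show j + 1 ≤ n by omega)
    have hjk : (j:ℝ) + 1 ≤ (k:ℝ) := by exact_mod_cast h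
    have hmul : ((n:ℝ) - k + 1) * ((j:ℝ) + 1) ≤ (k:ℝ) * ((n:ℝ) - j) := by nlinarith
    have h1 := mul_le_mul_of_nonneg_right hmul (mul_nonneg hq'.le hb2.le)
    have h2 : ((n:ℝ) - k + 1) * (((n:ℝ) - j) * p * b n j p)
        = ((n:ℝ) - k + 1) * (((j:ℝ) + 1) * (1 - p) * b n (j+1) p) := by rw [hr]
    have h3 : (((n:ℝ) - k + 1) * p * b n j p) * ((n:ℝ) - j)
        ≤ ((k:ℝ) * (1 - p) * b n (j+1) p) * ((n:ℝ) - j) := by nlinarith [h1, h2]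
    have hjn' : (j:ℝ) + 1 ≤ (n:ℝ) := by exact_mod_cast hjn
    have h4 := le_of_mul_le_mul_right h3 (show (0:ℝ) < (n:ℝ) - j by linarith)
    rw [B_succ]
    nlinarith [hik, h4]

set_option maxHeartbeats 2000000 in
theorem partial_mean_and_ratio_bounds
    (k : ℕ) (n : ℕ) (hn : 0 < n) (hkn : k ≤ n) (p : ℝ) (hp0 : 0 < p) (hp1 : p < 1) :
    ((k : ℝ) + 1 - L ((n : ℝ) - 1) k p ≤ mu n k p ∧
      (k : ℝ) + 1 - L ((n : ℝ) - 1) k p =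
        (p * n + k + (1 - p) -
          Real.sqrt ((p * n - k + (1 - p)) ^ 2 + 4 * (1 - p) * k)) / 2) ∧
    (((n : ℝ) - k + 1) / ((n + 1) * (1 - p)) ≤ B n k p / B (n + 1) k p ∧
      B n k p / B (n + 1) k p ≤ ((n : ℝ) - k + L n k p) / ((n + 1) * (1 - p))) ∧
    ((k : ℝ) ≤ p * n →
      (k : ℝ) + (1 - p) / 2 - Real.sqrt ((1 - p) * (4 * k + (1 - p))) / 2 ≤ mu n k p ∧
      (k : ℝ) - Real.sqrt ((1 - p) * k) ≤
        (k : ℝ) + (1 - p) / 2 - Real.sqrt ((1 - p) * (4 * k + (1 - p))) / 2) := by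
  have hq' : (0:ℝ) < 1 - p := by linarith
  have hk0 : (0:ℝ) ≤ (k:ℝ) := by positivity
  have hknR : (k:ℝ) ≤ (n:ℝ) := by exact_mod_cast hkn
  have hBpos := B_pos hp0 hp1 n k
  have hB1pos := B_pos hp0 hp1 (n+1) k
  have hbpos := b_pos hp0 hp1 hkn
  have hPas2 : B (n+1) k p = B n k p - p * b n k p := B_pascal hp0 hkn
  -- part 1b : the algebraic identity
  have heq1 : (k:ℝ) + 1 - L ((n:ℝ) - 1) k p =
      (p * n + k + (1 - p) - Real.sqrt ((p * n - k + (1 - p)) ^ 2 + 4 * (1 - p) * k)) / 2 := by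
    unfold L
    rw [show (p * ((n:ℝ) - 1) - k + 1) ^ 2 + 4 * (1 - p) * k
        = (p * (n:ℝ) - k + (1 - p)) ^ 2 + 4 * (1 - p) * k from by ring]
    ring
  -- mu as a quotient
  have hmu : mu n k p = ((n:ℝ) * p * B n k p - p * ((n:ℝ) - k) * b n k p) / B n k p := by
    unfold mu
    rw [← Finset.sum_div, sum_j_b hp0 hkn]
  -- part 1a
  have hL'1 : 1 ≤ L ((n:ℝ) - 1) (k:ℝ) p := L_ge_one hk0 hp1.le
  have hquad' : L ((n:ℝ)-1) (k:ℝ) p ^ 2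
      = ((k:ℝ) + 1 - p * ((n:ℝ)-1)) * L ((n:ℝ)-1) (k:ℝ) p + p * (((n:ℝ)-1) - k) :=
    L_quad hk0 hp1.le
  have part1a : (k:ℝ) + 1 - L ((n:ℝ) - 1) k p ≤ mu n k p := by
    rw [hmu, le_div_iff₀ hBpos]
    rcases eq_or_lt_of_le hkn with rfl | hlt
    · -- k = n
      have hLlow : (k:ℝ) + 1 - p * k ≤ L ((k:ℝ) - 1) (k:ℝ) p := by
        apply le_L
        nlinarith [mul_nonneg (mul_nonneg hk0 hp0.le) hq'.le]
      nlinarith [mul_nonneg (sub_nonneg.mpr hLlow) hBpos.le]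
    · -- k < n
      set m := n - 1 with hmdef
      have hm : m + 1 = n := Nat.succ_pred_eq_of_pos hn
      have hkm : k ≤ m := by omega
      have hcast : (n:ℝ) - 1 = (m:ℝ) := by
        rw [← hm]; push_cast; ring
      have hb' := b_pos hp0 hp1 hkm
      have hkey' : L ((n:ℝ)-1) (k:ℝ) p * b m k p ≤ B m k p := by
        rw [hcast]; exact key_lemma hp0 hp1 hkm
      have hPas : B n k p = B m k p - p * b m k p := by
        rw [← hm]; exact B_pascal hp0 hkm
      have hbb : ((n:ℝ) - k) * b n k p = (n:ℝ) * (1 - p) * b m k p := by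
        have hbl := b_left hp0 (p := p) hkm
        rw [← hm]; push_cast
        linarith [hbl]
      have heq : ((n:ℝ) * p - k - 1 + L ((n:ℝ)-1) (k:ℝ) p) * (L ((n:ℝ)-1) (k:ℝ) p - p)
          = p * (n:ℝ) * (1 - p) := by
        linear_combination hquad'
      have hL'p : p < L ((n:ℝ)-1) (k:ℝ) p := by linarith
      have hnpos : (0:ℝ) < (n:ℝ) := by exact_mod_cast hn
      have hcoef : 0 < (n:ℝ) * p - k - 1 + L ((n:ℝ)-1) (k:ℝ) p := by
        nlinarith [heq, mul_pos (mul_pos hp0 hnpos) hq', hL'p]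
      have hstep1 : p * ((n:ℝ) - k) * b n k p
          = ((n:ℝ) * p - k - 1 + L ((n:ℝ)-1) (k:ℝ) p)
            * ((L ((n:ℝ)-1) (k:ℝ) p - p) * b m k p) := by
        linear_combination p * hbb - (b m k p) * heq
      have hstep2 : (L ((n:ℝ)-1) (k:ℝ) p - p) * b m k p ≤ B n k p := by
        rw [hPas]; nlinarith [hkey']
      have hstep3 := mul_le_mul_of_nonneg_left hstep2 hcoef.le
      nlinarith [hstep1, hstep3]
  -- part 2 lower
  have hden : (0:ℝ) < ((n:ℝ) + 1) * (1 - p) := by positivity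
  have part2a : ((n:ℝ) - k + 1) / (((n:ℝ) + 1) * (1 - p)) ≤ B n k p / B (n+1) k p := by
    rw [div_le_div_iff₀ hden hB1pos, hPas2]
    have hG := Gclaim hp0 hp1 hkn k le_rfl
    nlinarith [hG]
  -- part 2 upper
  have hL1 : 1 ≤ L (n:ℝ) (k:ℝ) p := L_ge_one hk0 hp1.le
  have hquadn : L (n:ℝ) (k:ℝ) p ^ 2
      = ((k:ℝ) + 1 - p * (n:ℝ)) * L (n:ℝ) (k:ℝ) p + p * ((n:ℝ) - k) := L_quad hk0 hp1.le
  have part2b : B n k p / B (n+1) k p ≤ ((n:ℝ) - k + L n k p) / (((n:ℝ) + 1) * (1 - p)) := by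
    rw [div_le_div_iff₀ hB1pos hden, hPas2]
    have hγ : (L (n:ℝ) (k:ℝ) p + ((n:ℝ)+1) * p - k - 1) * L (n:ℝ) (k:ℝ) p
        = p * ((n:ℝ) - k + L (n:ℝ) (k:ℝ) p) := by
      linear_combination hquadn
    have hγpos : 0 < L (n:ℝ) (k:ℝ) p + ((n:ℝ)+1) * p - k - 1 := by
      nlinarith [hγ, hL1, mul_pos hp0 (show (0:ℝ) < (n:ℝ) - k + L (n:ℝ) (k:ℝ) p by linarith)]
    have hkeyn := key_lemma hp0 hp1 hkn
    have h1 := mul_le_mul_of_nonneg_left hkeyn hγpos.le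
    have h2 : (L (n:ℝ) (k:ℝ) p + ((n:ℝ)+1) * p - k - 1) * (L (n:ℝ) (k:ℝ) p * b n k p)
        = p * ((n:ℝ) - k + L (n:ℝ) (k:ℝ) p) * b n k p := by
      linear_combination (b n k p) * hγ
    nlinarith [h1, h2]
  refine ⟨⟨part1a, heq1⟩, ⟨part2a, part2b⟩, ?_⟩
  -- part 3
  intro hk3
  have ht : 0 ≤ p * n - k := by linarith
  have hY : (0:ℝ) ≤ (1 - p) * (4 * k + (1 - p)) := by positivity
  have hsqY := Real.sq_sqrt hY
  have hsY := Real.sqrt_nonneg ((1 - p) * (4 * k + (1 - p)))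
  have hqY : 1 - p ≤ Real.sqrt ((1 - p) * (4 * k + (1 - p))) := by
    have h0 : Real.sqrt ((1-p)^2) ≤ Real.sqrt ((1 - p) * (4 * k + (1 - p))) :=
      Real.sqrt_le_sqrt (by nlinarith [mul_nonneg hq'.le hk0])
    rwa [Real.sqrt_sq hq'.le] at h0
  have hbound1 : (k:ℝ) + (1 - p)/2 - Real.sqrt ((1-p) * (4*k + (1-p)))/2
      ≤ (k:ℝ) + 1 - L ((n:ℝ) - 1) k p := by
    rw [heq1]
    have hX : (p * n - k + (1 - p)) ^ 2 + 4 * (1 - p) * k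
        ≤ ((p * n - k) + Real.sqrt ((1-p) * (4*k + (1-p)))) ^ 2 := by
      nlinarith [mul_le_mul_of_nonneg_left hqY ht, hsqY]
    have hsx : Real.sqrt ((p * n - k + (1 - p)) ^ 2 + 4 * (1 - p) * k)
        ≤ (p * n - k) + Real.sqrt ((1-p) * (4*k + (1-p))) := by
      calc Real.sqrt ((p * n - k + (1 - p)) ^ 2 + 4 * (1 - p) * k)
          ≤ Real.sqrt (((p * n - k) + Real.sqrt ((1-p) * (4*k + (1-p)))) ^ 2) :=
            Real.sqrt_le_sqrt hX
        _ = _ := Real.sqrt_sq (by linarith)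
    linarith
  have hZ : (0:ℝ) ≤ (1 - p) * k := mul_nonneg hq'.le hk0
  have hsqZ := Real.sq_sqrt hZ
  have hsZ := Real.sqrt_nonneg ((1 - p) * k)
  have hbound2 : (k:ℝ) - Real.sqrt ((1 - p) * k)
      ≤ (k:ℝ) + (1 - p)/2 - Real.sqrt ((1-p) * (4*k + (1-p)))/2 := by
    have hY2 : (1 - p) * (4 * k + (1 - p)) ≤ ((1 - p) + 2 * Real.sqrt ((1-p)*k)) ^ 2 := by
      nlinarith [mul_nonneg hq'.le hsZ, hsqZ]
    have hsy2 : Real.sqrt ((1-p) * (4*k + (1-p))) ≤ (1 - p) + 2 * Real.sqrt ((1-p)*k) := by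
      calc Real.sqrt ((1-p) * (4*k + (1-p)))
          ≤ Real.sqrt (((1 - p) + 2 * Real.sqrt ((1-p)*k)) ^ 2) := Real.sqrt_le_sqrt hY2
        _ = _ := Real.sqrt_sq (by linarith)
    linarith
  exact ⟨le_trans hbound1 part1a, hbound2⟩
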